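/- For every n ∈ ℕ, with m = n(n−1)/2, there exists an injective group homomorphism φ̄ : T*(n,ℝ) → T*(m+n+1,ℝ) such that the bottom-right entry of φ̄(g) equals 1 for every g, and φ̄(g) is essentially hyperbolic for every g ≠ 1. -/

import Mathlib

section Matrices

variable {R : Type*} {n : ℕ}

theorem diag_mul_of_triangular [CommRing R] {A B : Matrix (Fin n) (Fin n) R}
    (hA : A.BlockTriangular id) (hB : B.BlockTriangular id) (i : Fin n) :
    (A * B) i i = A i i * B i i := by
  rw [Matrix.mul_apply]
  apply Finset.sum_eq_single i
  · intro k _ hk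
    rcases lt_or_gt_of_ne hk with h | h
    · rw [hA (show (id : Fin n → Fin n) k < id i from h), zero_mul]
    · rw [hB (show (id : Fin n → Fin n) i < id k from h), mul_zero]
  · intro h; exact absurd (Finset.mem_univ i) h

/-- The group `UT(n,R)` of upper triangular `n × n` matrices over `R` with all diagonal
entries equal to `1`, realised as a subgroup of the group of units of the matrix ring. -/
def UT (n : ℕ) (R : Type*) [CommRing R] : Subgroup (Matrix (Fin n) (Fin n) R)ˣ where
  carrier := {A | (∀ i j : Fin n, j < i → (A : Matrix (Fin n) (Fin n) R) i j = 0) ∧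
    ∀ i : Fin n, (A : Matrix (Fin n) (Fin n) R) i i = 1}
  one_mem' := by
    refine ⟨fun i j hij => ?_, fun i => ?_⟩
    · simp [Matrix.one_apply, (ne_of_lt hij).symm]
    · simp
  mul_mem' := by
    rintro A B ⟨hA1, hA2⟩ ⟨hB1, hB2⟩
    have hA : (A : Matrix (Fin n) (Fin n) R).BlockTriangular id := fun i j h => hA1 i j h
    have hB : (B : Matrix (Fin n) (Fin n) R).BlockTriangular id := fun i j h => hB1 i j h
    refine ⟨fun i j hij => ?_, fun i => ?_⟩
    · exact (hA.mul hB) (show (id : Fin n → Fin n) j < id i from hij)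
    · rw [Units.val_mul, diag_mul_of_triangular hA hB, hA2, hB2, one_mul]
  inv_mem' := by
    rintro A ⟨hA1, hA2⟩
    have hA : (A : Matrix (Fin n) (Fin n) R).BlockTriangular id := fun i j h => hA1 i j h
    haveI := A.invertible
    have hAinv : ((A : Matrix (Fin n) (Fin n) R)⁻¹).BlockTriangular id :=
      Matrix.blockTriangular_inv_of_blockTriangular hA
    have hcoe : ((A⁻¹ : (Matrix (Fin n) (Fin n) R)ˣ) : Matrix (Fin n) (Fin n) R)
        = (A : Matrix (Fin n) (Fin n) R)⁻¹ := Matrix.coe_units_inv A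
    refine ⟨fun i j hij => ?_, fun i => ?_⟩
    · rw [hcoe]; exact hAinv (show (id : Fin n → Fin n) j < id i from hij)
    · have h1 : ((A : Matrix (Fin n) (Fin n) R) * (A : Matrix (Fin n) (Fin n) R)⁻¹) i i = 1 := by
        rw [Matrix.mul_inv_of_invertible]; simp
      rw [diag_mul_of_triangular hA hAinv, hA2, one_mul] at h1
      rw [hcoe, h1]

/-- The group `T*(n,R)` of upper triangular `n × n` matrices over a linearly ordered field `R`
with positive diagonal entries, realised as a subgroup of the units of the matrix ring. -/
def Tstar (n : ℕ) (R : Type*) [Field R] [LinearOrder R] [IsStrictOrderedRing R] : Subgroup (Matrix (Fin n) (Fin n) R)ˣ where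
  carrier := {A | (∀ i j : Fin n, j < i → (A : Matrix (Fin n) (Fin n) R) i j = 0) ∧
    ∀ i : Fin n, 0 < (A : Matrix (Fin n) (Fin n) R) i i}
  one_mem' := by
    refine ⟨fun i j hij => ?_, fun i => ?_⟩
    · simp [Matrix.one_apply, (ne_of_lt hij).symm]
    · simp
  mul_mem' := by
    rintro A B ⟨hA1, hA2⟩ ⟨hB1, hB2⟩
    have hA : (A : Matrix (Fin n) (Fin n) R).BlockTriangular id := fun i j h => hA1 i j h
    have hB : (B : Matrix (Fin n) (Fin n) R).BlockTriangular id := fun i j h => hB1 i j h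
    refine ⟨fun i j hij => ?_, fun i => ?_⟩
    · exact (hA.mul hB) (show (id : Fin n → Fin n) j < id i from hij)
    · rw [Units.val_mul, diag_mul_of_triangular hA hB]
      exact mul_pos (hA2 i) (hB2 i)
  inv_mem' := by
    rintro A ⟨hA1, hA2⟩
    have hA : (A : Matrix (Fin n) (Fin n) R).BlockTriangular id := fun i j h => hA1 i j h
    haveI := A.invertible
    have hAinv : ((A : Matrix (Fin n) (Fin n) R)⁻¹).BlockTriangular id :=
      Matrix.blockTriangular_inv_of_blockTriangular hA
    have hcoe : ((A⁻¹ : (Matrix (Fin n) (Fin n) R)ˣ) : Matrix (Fin n) (Fin n) R)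
        = (A : Matrix (Fin n) (Fin n) R)⁻¹ := Matrix.coe_units_inv A
    refine ⟨fun i j hij => ?_, fun i => ?_⟩
    · rw [hcoe]; exact hAinv (show (id : Fin n → Fin n) j < id i from hij)
    · have h1 : ((A : Matrix (Fin n) (Fin n) R) * (A : Matrix (Fin n) (Fin n) R)⁻¹) i i = 1 := by
        rw [Matrix.mul_inv_of_invertible]; simp
      rw [diag_mul_of_triangular hA hAinv] at h1
      rw [hcoe]
      rcases lt_trichotomy ((A : Matrix (Fin n) (Fin n) R)⁻¹ i i) 0 with h | h | h
      · exact absurd h1 (by nlinarith [hA2 i])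
      · rw [h, mul_zero] at h1; exact absurd h1 zero_ne_one
      · exact h

/-- The last index of `Fin N` (any element of `Fin N` witnesses `0 < N`). -/
def lastOf {N : ℕ} (r : Fin N) : Fin N := ⟨N - 1, Nat.sub_lt r.pos Nat.one_pos⟩

/-- A square matrix `g` (upper triangular, with positive diagonal and bottom-right entry `1`)
is *essentially hyperbolic* if `g ≠ 1` and there is a row index `r` which is not the last row
such that `(g-1)_{r,N} ≠ 0` (where `N` is the last column) and every nonzero entry of `g - 1`
lies either in a row strictly above `r`, or at position `(r, N)`. -/
def EssentiallyHyperbolic {N : ℕ} {R : Type*} [CommRing R]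
    (g : Matrix (Fin N) (Fin N) R) : Prop :=
  g ≠ 1 ∧ ∃ r : Fin N, (r : ℕ) + 1 < N ∧ (g - 1) r (lastOf r) ≠ 0 ∧
    ∀ i j : Fin N, (g - 1) i j ≠ 0 → i < r ∨ (i = r ∧ j = lastOf r)

end Matrices

/-- The multiplicative group structure on `AddAut A` (composition), which older Mathlib
provided as `AddAut.group` and current Mathlib replaced by an additive one. -/
instance AddAut.group {A : Type*} [Add A] : Group (AddAut A) where
  mul g h := AddEquiv.trans h g
  one := AddEquiv.refl _
  inv := AddEquiv.symm
  mul_assoc _ _ _ := rfl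
  one_mul _ := rfl
  mul_one _ := rfl
  inv_mul_cancel := AddEquiv.self_trans_symm

/-- The group of order-preserving additive automorphisms of a linearly ordered abelian
group `Λ`, as a subgroup of `AddAut Λ`. -/
def orderAddAut (Λ : Type*) [AddCommGroup Λ] [LinearOrder Λ] [IsOrderedAddMonoid Λ] : Subgroup (AddAut Λ) where
  carrier := {f | StrictMono f}
  one_mem' := strictMono_id
  mul_mem' := by
    intro f g hf hg a b hab
    exact hf (hg hab)
  inv_mem' := by
    intro f hf a b hab
    show f.symm a < f.symm b
    exact hf.lt_iff_lt.1 (by simpa using hab)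



namespace EHAux

open Finset

def tri : ℕ → ℕ
  | 0 => 0
  | a+1 => tri a + a + 1

lemma tri_succ (a : ℕ) : tri (a+1) = tri a + a + 1 := rfl

lemma tri_mono : Monotone tri :=
  monotone_nat_of_le_succ (fun a => by rw [tri_succ]; omega)

lemma tri_add_lt {a b i : ℕ} (hi : i ≤ a) (h : a < b) : tri a + i < tri b := by
  have h1 : tri (a+1) ≤ tri b := tri_mono h
  rw [tri_succ] at h1; omega

lemma two_mul_tri (a : ℕ) : 2 * tri a = a * (a+1) := by
  induction a with
  | zero => rfl
  | succ a ih =>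
    have h : (a+1) * (a+1+1) = a * (a+1) + 2*(a+1) := by ring
    rw [tri_succ]; omega

lemma m_eq_tri (n : ℕ) : n * (n-1) / 2 = tri (n-1) := by
  cases n with
  | zero => rfl
  | succ k =>
    have h1 := two_mul_tri k
    have h3 : (k+1) * k = k * (k+1) := Nat.mul_comm _ _
    simp only [Nat.add_sub_cancel]
    omega

abbrev Pairs (n : ℕ) := {p : Fin n × Fin n // p.1 < p.2}
abbrev Idx (n : ℕ) := Pairs n ⊕ (Fin n ⊕ Unit)

def key (n : ℕ) : Idx n → ℕ
  | Sum.inl p => tri ((n - 1 - (p.1.2 : ℕ)) + (p.1.1 : ℕ)) + (p.1.1 : ℕ)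
  | Sum.inr (Sum.inl k) => tri (n-1) + (k : ℕ)
  | Sum.inr (Sum.inr _) => tri (n-1) + n

lemma keyP_lt (n : ℕ) (p : Pairs n) : key n (Sum.inl p) < tri (n-1) := by
  obtain ⟨⟨i, j⟩, hij⟩ := p
  have h1 : (i:ℕ) < (j:ℕ) := hij
  have h2 : (j:ℕ) < n := j.isLt
  show tri ((n - 1 - (j:ℕ)) + (i:ℕ)) + (i:ℕ) < tri (n-1)
  exact tri_add_lt (by omega) (by omega)

lemma keyP_lt_col (n : ℕ) {i l j : Fin n} (hij : i < j) (hil : i < l) (hlj : l < j) :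
    key n (Sum.inl ⟨(i,j), hij⟩) < key n (Sum.inl ⟨(i,l), hil⟩) := by
  have h2 : (j:ℕ) < n := j.isLt
  have h3 : (l:ℕ) < (j:ℕ) := hlj
  show tri ((n-1-(j:ℕ)) + (i:ℕ)) + (i:ℕ) < tri ((n-1-(l:ℕ)) + (i:ℕ)) + (i:ℕ)
  have := tri_add_lt (a := (n-1-(j:ℕ)) + (i:ℕ)) (i := (i:ℕ))
    (by omega) (b := (n-1-(l:ℕ)) + (i:ℕ)) (by omega)
  omega

lemma keyP_lt_row (n : ℕ) {i l j : Fin n} (hij : i < j) (hlj : l < j) (hil : i < l) :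
    key n (Sum.inl ⟨(i,j), hij⟩) < key n (Sum.inl ⟨(l,j), hlj⟩) := by
  have h2 : (j:ℕ) < n := j.isLt
  have h3 : (i:ℕ) < (l:ℕ) := hil
  show tri ((n-1-(j:ℕ)) + (i:ℕ)) + (i:ℕ) < tri ((n-1-(j:ℕ)) + (l:ℕ)) + (l:ℕ)
  have := tri_add_lt (a := (n-1-(j:ℕ)) + (i:ℕ)) (i := (i:ℕ))
    (by omega) (b := (n-1-(j:ℕ)) + (l:ℕ)) (by omega)
  omega

lemma tri_decode {a b i l : ℕ} (hi : i ≤ a) (hl : l ≤ b) (h : tri a + i = tri b + l) :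
    a = b ∧ i = l := by
  rcases lt_trichotomy a b with hab | hab | hab
  · have := tri_add_lt hi hab; omega
  · subst hab; omega
  · have := tri_add_lt hl hab; omega

lemma key_inj (n : ℕ) : Function.Injective (key n) := by
  rintro (⟨⟨i,j⟩,hij⟩ | (k | ⟨⟩)) (⟨⟨i',j'⟩,hij'⟩ | (k' | ⟨⟩)) h <;>
    simp only [key] at h
  · have h1 : (i:ℕ) < j := hij
    have h1' : (i':ℕ) < j' := hij'
    have h2 : (j:ℕ) < n := j.isLt
    have h2' : (j':ℕ) < n := j'.isLt
    have hd := tri_decode (a := (n-1-(j:ℕ)) + (i:ℕ)) (i := (i:ℕ)) (by omega)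
      (b := (n-1-(j':ℕ)) + (i':ℕ)) (l := (i':ℕ)) (by omega) h
    have hv : (i:ℕ) = i' ∧ (j:ℕ) = j' := by omega
    simp only [Sum.inl.injEq, Subtype.mk.injEq, Prod.mk.injEq]
    exact ⟨Fin.ext hv.1, Fin.ext hv.2⟩
  · exfalso
    have := keyP_lt n ⟨(i,j),hij⟩
    simp only [key] at this; omega
  · exfalso
    have := keyP_lt n ⟨(i,j),hij⟩
    simp only [key] at this; omega
  · exfalso
    have := keyP_lt n ⟨(i',j'),hij'⟩
    simp only [key] at this; omega
  · have : (k:ℕ) = k' := by omega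
    simp [Fin.ext this]
  · exfalso; have := k.isLt; omega
  · exfalso
    have := keyP_lt n ⟨(i',j'),hij'⟩
    simp only [key] at this; omega
  · exfalso; have := k'.isLt; omega
  · rfl

def keyFin (n : ℕ) (x : Idx n) : Fin (n*(n-1)/2 + n + 1) :=
  ⟨key n x, by
    have hm := m_eq_tri n
    rcases x with p | (k | u)
    · have := keyP_lt n p; omega
    · have := k.isLt; simp only [key]; omega
    · simp only [key]; omega⟩

def pairsEquiv (n : ℕ) : Pairs n ≃ Σ j : Fin n, Fin (j:ℕ) where
  toFun p := ⟨p.1.2, ⟨(p.1.1 : ℕ), p.2⟩⟩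
  invFun q := ⟨(⟨(q.2 : ℕ), lt_trans q.2.isLt q.1.isLt⟩, q.1), q.2.isLt⟩
  left_inv := fun ⟨⟨i,j⟩,h⟩ => rfl
  right_inv := fun ⟨j,i⟩ => rfl

lemma card_idx (n : ℕ) : Fintype.card (Idx n) = n*(n-1)/2 + n + 1 := by
  have h1 : Fintype.card (Pairs n) = n*(n-1)/2 := by
    rw [Fintype.card_congr (pairsEquiv n), Fintype.card_sigma]
    simp only [Fintype.card_fin]
    rw [Fin.sum_univ_eq_sum_range (fun i => i), Finset.sum_range_id]
  simp only [Fintype.card_sum, h1, Fintype.card_fin, Fintype.card_unit]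
  omega

noncomputable def eIdx (n : ℕ) : Idx n ≃ Fin (n*(n-1)/2 + n + 1) :=
  Equiv.ofBijective (keyFin n)
    ((Fintype.bijective_iff_injective_and_card _).2
      ⟨fun x y h => key_inj n (congrArg Fin.val h), by rw [card_idx n, Fintype.card_fin]⟩)

lemma eIdx_val (n : ℕ) (x : Idx n) : ((eIdx n x : Fin _) : ℕ) = key n x := rfl

-- INSERT2
section MmDef

noncomputable def Mm (n : ℕ) (A : Matrix (Fin n) (Fin n) ℝ) : Matrix (Idx n) (Idx n) ℝ :=
  Matrix.of fun x y =>
    match x, y with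
    | Sum.inl p, Sum.inl q =>
        if q.1.1 = p.1.1 ∧ q.1.2 ≤ p.1.2 then A q.1.2 p.1.2 / A p.1.1 p.1.1 else 0
    | Sum.inl p, Sum.inr (Sum.inr _) => A p.1.1 p.1.2 / A p.1.1 p.1.1
    | Sum.inl _, Sum.inr (Sum.inl _) => 0
    | Sum.inr (Sum.inl k), Sum.inr (Sum.inl k') => if k' = k then 1 else 0
    | Sum.inr (Sum.inl k), Sum.inr (Sum.inr _) => Real.log (A k k)
    | Sum.inr (Sum.inl _), Sum.inl _ => 0
    | Sum.inr (Sum.inr _), Sum.inl _ => 0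
    | Sum.inr (Sum.inr _), Sum.inr (Sum.inl _) => 0
    | Sum.inr (Sum.inr _), Sum.inr (Sum.inr _) => 1

variable {n : ℕ} {A : Matrix (Fin n) (Fin n) ℝ}

lemma Mm_PP (p q : Pairs n) :
    Mm n A (Sum.inl p) (Sum.inl q)
      = if q.1.1 = p.1.1 ∧ q.1.2 ≤ p.1.2 then A q.1.2 p.1.2 / A p.1.1 p.1.1 else 0 := rfl

lemma Mm_PL (p : Pairs n) (k : Fin n) : Mm n A (Sum.inl p) (Sum.inr (Sum.inl k)) = 0 := rfl

lemma Mm_PC (p : Pairs n) (u : Unit) :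
    Mm n A (Sum.inl p) (Sum.inr (Sum.inr u)) = A p.1.1 p.1.2 / A p.1.1 p.1.1 := rfl

lemma Mm_LP (k : Fin n) (q : Pairs n) : Mm n A (Sum.inr (Sum.inl k)) (Sum.inl q) = 0 := rfl

lemma Mm_LL (k k' : Fin n) :
    Mm n A (Sum.inr (Sum.inl k)) (Sum.inr (Sum.inl k')) = if k' = k then 1 else 0 := rfl

lemma Mm_LC (k : Fin n) (u : Unit) :
    Mm n A (Sum.inr (Sum.inl k)) (Sum.inr (Sum.inr u)) = Real.log (A k k) := rfl

lemma Mm_CP (u : Unit) (q : Pairs n) : Mm n A (Sum.inr (Sum.inr u)) (Sum.inl q) = 0 := rfl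

lemma Mm_CL (u : Unit) (k : Fin n) :
    Mm n A (Sum.inr (Sum.inr u)) (Sum.inr (Sum.inl k)) = 0 := rfl

lemma Mm_CC (u u' : Unit) :
    Mm n A (Sum.inr (Sum.inr u)) (Sum.inr (Sum.inr u')) = 1 := rfl

lemma sum_idx {M : Type*} [AddCommMonoid M] (F : Idx n → M) :
    ∑ x : Idx n, F x =
      (∑ p : Pairs n, F (Sum.inl p)) +
        ((∑ k : Fin n, F (Sum.inr (Sum.inl k))) + F (Sum.inr (Sum.inr ()))) := by
  rw [Fintype.sum_sum_type, Fintype.sum_sum_type]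
  simp

lemma sum_pairs {M : Type*} [AddCommMonoid M] (F : Pairs n → M) :
    (∑ p : Pairs n, F p)
      = ∑ i : Fin n, ∑ j : Fin n, (if h : i < j then F ⟨(i,j), h⟩ else 0) := by
  classical
  have h2 : (∑ p : Pairs n, F p)
      = ∑ p : Pairs n, (fun q : Fin n × Fin n => if h : q.1 < q.2 then F ⟨q, h⟩ else 0) (↑p) := by
    refine Finset.sum_congr rfl ?_
    rintro ⟨⟨i,j⟩,hq⟩ _
    simp [hq]
  rw [h2, ← Finset.sum_subtype (Finset.univ.filter (fun q : Fin n × Fin n => q.1 < q.2))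
      (by simp) (fun q : Fin n × Fin n => if h : q.1 < q.2 then F ⟨q, h⟩ else 0)]
  rw [Finset.sum_filter, Fintype.sum_prod_type]
  refine Finset.sum_congr rfl fun i _ => Finset.sum_congr rfl fun j _ => ?_
  by_cases h : i < j
  · simp [h]
  · simp [h]

end MmDef

section Primed
variable {n : ℕ} {A : Matrix (Fin n) (Fin n) ℝ}

lemma Mm_PP' {i j i' l : Fin n} (hij : i < j) (hil : i' < l) :
    Mm n A (Sum.inl ⟨(i,j),hij⟩) (Sum.inl ⟨(i',l),hil⟩)
      = if i' = i ∧ l ≤ j then A l j / A i i else 0 := rfl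

lemma Mm_PC' {i j : Fin n} (hij : i < j) (u : Unit) :
    Mm n A (Sum.inl ⟨(i,j),hij⟩) (Sum.inr (Sum.inr u)) = A i j / A i i := rfl

lemma idx_ne_LC {k : Fin n} {u : Unit} :
    (Sum.inr (Sum.inl k) : Idx n) ≠ Sum.inr (Sum.inr u) := by
  intro hc; injection hc with h2; exact Sum.inl_ne_inr h2

lemma idx_ne_CL {k : Fin n} {u : Unit} :
    (Sum.inr (Sum.inr u) : Idx n) ≠ Sum.inr (Sum.inl k) := by
  intro hc; injection hc with h2; exact Sum.inr_ne_inl h2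

end Primed

section MmMul

variable {n : ℕ}

lemma Mm_one : Mm n (1 : Matrix (Fin n) (Fin n) ℝ) = 1 := by
  ext x y
  rcases x with p | (k | ⟨⟩) <;> rcases y with q | (k' | ⟨⟩)
  · rw [Mm_PP, Matrix.one_apply_eq, div_one, Matrix.one_apply, Matrix.one_apply]
    rcases eq_or_ne p q with hpq | hpq
    · subst hpq; simp [p.2.le]
    · rw [if_neg (fun hc : Sum.inl p = Sum.inl q => hpq (Sum.inl_injective hc))]
      by_cases h1 : q.1.1 = p.1.1 ∧ q.1.2 ≤ p.1.2
      · rw [if_pos h1, if_neg]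
        intro h2
        exact hpq (Subtype.ext (Prod.ext h1.1 h2)).symm
      · rw [if_neg h1]
  · rw [Mm_PL, Matrix.one_apply_ne Sum.inl_ne_inr]
  · rw [Mm_PC, Matrix.one_apply_ne (Fin.ne_of_lt p.2), Matrix.one_apply_ne Sum.inl_ne_inr,
      zero_div]
  · rw [Mm_LP, Matrix.one_apply_ne Sum.inr_ne_inl]
  · rw [Mm_LL, Matrix.one_apply]
    rcases eq_or_ne k' k with h | h
    · subst h; simp
    · rw [if_neg h, if_neg]
      intro hc
      injection hc with h2
      injection h2 with h3
      exact h h3.symm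
  · rw [Mm_LC, Matrix.one_apply_eq, Real.log_one, Matrix.one_apply_ne idx_ne_LC]
  · rw [Mm_CP, Matrix.one_apply_ne Sum.inr_ne_inl]
  · rw [Mm_CL, Matrix.one_apply_ne idx_ne_CL]
  · rw [Mm_CC, Matrix.one_apply_eq]

lemma Mm_mul (A B : Matrix (Fin n) (Fin n) ℝ)
    (hA1 : ∀ i j : Fin n, j < i → A i j = 0) (hA2 : ∀ i, 0 < A i i)
    (hB1 : ∀ i j : Fin n, j < i → B i j = 0) (hB2 : ∀ i, 0 < B i i) :
    Mm n (A * B) = Mm n B * Mm n A := by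
  have hd : ∀ i, (A*B) i i = A i i * B i i := fun i =>
    diag_mul_of_triangular (fun a b h => hA1 a b h) (fun a b h => hB1 a b h) i
  have hA0 : ∀ i : Fin n, A i i ≠ 0 := fun i => (hA2 i).ne'
  have hB0 : ∀ i : Fin n, B i i ≠ 0 := fun i => (hB2 i).ne'
  ext x y
  rw [Matrix.mul_apply, sum_idx (fun z => Mm n B x z * Mm n A z y)]
  rcases x with ⟨⟨i,j⟩,hij⟩ | (k | u)
  · -- pair row
    have hS2 : (∑ k : Fin n, Mm n B (Sum.inl ⟨(i,j),hij⟩) (Sum.inr (Sum.inl k)) *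
        Mm n A (Sum.inr (Sum.inl k)) y) = 0 := by
      simp [Mm_PL]
    have hS1 : (∑ p : Pairs n, Mm n B (Sum.inl ⟨(i,j),hij⟩) (Sum.inl p) * Mm n A (Sum.inl p) y)
        = ∑ l : Fin n, (if h : i < l then
            (if l ≤ j then B l j / B i i else 0) * Mm n A (Sum.inl ⟨(i,l), h⟩) y else 0) := by
      rw [sum_pairs (F := fun p => Mm n B (Sum.inl ⟨(i,j),hij⟩) (Sum.inl p) *
        Mm n A (Sum.inl p) y)]
      rw [Finset.sum_eq_single i]
      · refine Finset.sum_congr rfl fun l _ => ?_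
        by_cases h : i < l
        · rw [dif_pos h, dif_pos h, Mm_PP']
          simp
        · rw [dif_neg h, dif_neg h]
      · intro b _ hb
        refine Finset.sum_eq_zero fun l _ => ?_
        by_cases h : b < l
        · rw [dif_pos h, Mm_PP', if_neg, zero_mul]
          rintro ⟨hc, -⟩; exact hb hc
        · rw [dif_neg h]
      · intro h; exact absurd (Finset.mem_univ i) h
    rw [hS1, hS2, Mm_PC', zero_add]
    rcases y with ⟨⟨i'',l'⟩,h''⟩ | (k'' | ⟨⟩)
    · -- column : pair
      rw [Mm_PP', Mm_CP, mul_zero, add_zero]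
      by_cases hc : i'' = i ∧ l' ≤ j
      · rw [if_pos hc]
        obtain ⟨hi, hl⟩ := hc
        subst hi
        have hexp : ∀ l : Fin n,
            (if h : i'' < l then (if l ≤ j then B l j / B i'' i'' else 0) *
              Mm n A (Sum.inl ⟨(i'',l), h⟩) (Sum.inl ⟨(i'',l'),h''⟩) else 0)
              = A l' l * B l j / (A i'' i'' * B i'' i'') := by
          intro l
          by_cases h1 : i'' < l
          · rw [dif_pos h1, Mm_PP']
            by_cases h2 : l ≤ j
            · rw [if_pos h2]
              by_cases h3 : l' ≤ l
              · rw [if_pos ⟨rfl, h3⟩]; ring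
              · rw [if_neg (by rintro ⟨-, hc2⟩; exact h3 hc2)]
                rw [hA1 l' l (lt_of_not_ge h3)]
                simp
            · rw [if_neg h2, hB1 l j (lt_of_not_ge h2)]
              simp
          · rw [dif_neg h1]
            rw [hA1 l' l (lt_of_le_of_lt (not_lt.1 h1) h''), zero_mul, zero_div]
        rw [Finset.sum_congr rfl (fun l _ => hexp l), ← Finset.sum_div, hd i'',
          Matrix.mul_apply]
      · rw [if_neg hc]
        symm
        refine Finset.sum_eq_zero fun l _ => ?_
        by_cases h1 : i < l
        · rw [dif_pos h1, Mm_PP']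
          by_cases h2 : i'' = i ∧ l' ≤ l
          · by_cases h3 : l ≤ j
            · exact absurd ⟨h2.1, le_trans h2.2 h3⟩ hc
            · rw [if_neg h3, zero_mul]
          · rw [if_neg h2, mul_zero]
        · rw [dif_neg h1]
    · -- column : log index
      rw [Mm_PL, Mm_CL, mul_zero, add_zero]
      symm
      refine Finset.sum_eq_zero fun l _ => ?_
      by_cases h1 : i < l
      · rw [dif_pos h1, Mm_PL, mul_zero]
      · rw [dif_neg h1]
    · -- column : const
      rw [Mm_PC', Mm_CC, mul_one, hd i]
      have hexp : ∀ l : Fin n,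
          (if h : i < l then (if l ≤ j then B l j / B i i else 0) *
            Mm n A (Sum.inl ⟨(i,l), h⟩) (Sum.inr (Sum.inr ())) else 0)
            = if l = i then 0 else A i l * B l j / (A i i * B i i) := by
        intro l
        by_cases h1 : i < l
        · rw [dif_pos h1, Mm_PC', if_neg (Fin.ne_of_gt h1)]
          by_cases h2 : l ≤ j
          · rw [if_pos h2]; ring
          · rw [if_neg h2, hB1 l j (lt_of_not_ge h2)]
            simp
        · rw [dif_neg h1]
          by_cases h2 : l = i
          · rw [if_pos h2]
          · rw [if_neg h2, hA1 i l (lt_of_le_of_ne (not_lt.1 h1) h2), zero_mul, zero_div]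
      rw [Finset.sum_congr rfl (fun l _ => hexp l)]
      have hsplit : ∀ l : Fin n, (if l = i then (0:ℝ) else A i l * B l j / (A i i * B i i))
          = A i l * B l j / (A i i * B i i)
            - (if l = i then A i l * B l j / (A i i * B i i) else 0) := by
        intro l; split_ifs <;> simp
      rw [Finset.sum_congr rfl (fun l _ => hsplit l), Finset.sum_sub_distrib,
        Finset.sum_ite_eq' Finset.univ i
          (fun l => A i l * B l j / (A i i * B i i)),
        if_pos (Finset.mem_univ i), ← Finset.sum_div, Matrix.mul_apply]
      have hred : A i i * B i j / (A i i * B i i) = B i j / B i i :=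
        mul_div_mul_left _ _ (hA0 i)
      rw [hred]
      ring
  · -- log row
    have hS1 : (∑ p : Pairs n, Mm n B (Sum.inr (Sum.inl k)) (Sum.inl p) *
        Mm n A (Sum.inl p) y) = 0 := by
      simp [Mm_LP]
    rw [hS1, Mm_LC]
    rcases y with ⟨⟨i'',l'⟩,h''⟩ | (k'' | ⟨⟩)
    · rw [Mm_LP, Mm_CP, mul_zero, add_zero, zero_add]
      symm
      refine Finset.sum_eq_zero fun k' _ => ?_
      rw [Mm_LP, mul_zero]
    · rw [Mm_LL, Mm_CL, mul_zero, add_zero, zero_add]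
      have hcoll : ∀ k' : Fin n, Mm n B (Sum.inr (Sum.inl k)) (Sum.inr (Sum.inl k')) *
          Mm n A (Sum.inr (Sum.inl k')) (Sum.inr (Sum.inl k''))
          = if k' = k then (if k'' = k' then (1:ℝ) else 0) else 0 := by
        intro k'
        rw [Mm_LL, Mm_LL]
        split_ifs <;> simp
      rw [Finset.sum_congr rfl (fun k' _ => hcoll k'), Finset.sum_ite_eq' Finset.univ k,
        if_pos (Finset.mem_univ k)]
    · rw [Mm_LC, Mm_CC, mul_one]
      have hcoll : ∀ k' : Fin n, Mm n B (Sum.inr (Sum.inl k)) (Sum.inr (Sum.inl k')) *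
          Mm n A (Sum.inr (Sum.inl k')) (Sum.inr (Sum.inr ()))
          = if k' = k then Real.log (A k' k') else 0 := by
        intro k'
        rw [Mm_LL, Mm_LC]
        split_ifs <;> simp
      rw [Finset.sum_congr rfl (fun k' _ => hcoll k'), Finset.sum_ite_eq' Finset.univ k,
        if_pos (Finset.mem_univ k), hd k, Real.log_mul (hA0 k) (hB0 k)]
      ring
  · -- const row
    have hS1 : (∑ p : Pairs n, Mm n B (Sum.inr (Sum.inr u)) (Sum.inl p) *
        Mm n A (Sum.inl p) y) = 0 := by
      simp [Mm_CP]
    have hS2 : (∑ k' : Fin n, Mm n B (Sum.inr (Sum.inr u)) (Sum.inr (Sum.inl k')) *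
        Mm n A (Sum.inr (Sum.inl k')) y) = 0 := by
      simp [Mm_CL]
    rw [hS1, hS2, Mm_CC, one_mul, zero_add, zero_add]
    rcases y with q | (k'' | ⟨⟩)
    · rw [Mm_CP, Mm_CP]
    · rw [Mm_CL, Mm_CL]
    · rw [Mm_CC, Mm_CC]

end MmMul

section Hom

variable {n : ℕ}

def matOf (g : Tstar n ℝ) : Matrix (Fin n) (Fin n) ℝ :=
  ((g : (Matrix (Fin n) (Fin n) ℝ)ˣ) : Matrix (Fin n) (Fin n) ℝ)

lemma matOf_tri (g : Tstar n ℝ) : ∀ i j : Fin n, j < i → matOf g i j = 0 := g.2.1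
lemma matOf_pos (g : Tstar n ℝ) : ∀ i, 0 < matOf g i i := g.2.2
lemma matOf_mul (g h : Tstar n ℝ) : matOf (g*h) = matOf g * matOf h := rfl
lemma matOf_one : matOf (1 : Tstar n ℝ) = 1 := rfl

noncomputable def phi0 (n : ℕ) : Tstar n ℝ →* (Matrix (Idx n) (Idx n) ℝ)ˣ where
  toFun g :=
    { val := Mm n (matOf g⁻¹)
      inv := Mm n (matOf g)
      val_inv := by
        rw [← Mm_mul (matOf g) (matOf g⁻¹) (matOf_tri g) (matOf_pos g)
          (matOf_tri g⁻¹) (matOf_pos g⁻¹), ← matOf_mul, mul_inv_cancel, matOf_one, Mm_one]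
      inv_val := by
        rw [← Mm_mul (matOf g⁻¹) (matOf g) (matOf_tri g⁻¹) (matOf_pos g⁻¹)
          (matOf_tri g) (matOf_pos g), ← matOf_mul, inv_mul_cancel, matOf_one, Mm_one] }
  map_one' := by
    apply Units.ext
    show Mm n (matOf (1 : Tstar n ℝ)⁻¹) = 1
    rw [inv_one, matOf_one, Mm_one]
  map_mul' := fun g h => by
    apply Units.ext
    show Mm n (matOf (g*h)⁻¹) = Mm n (matOf g⁻¹) * Mm n (matOf h⁻¹)
    rw [mul_inv_rev, matOf_mul, Mm_mul (matOf h⁻¹) (matOf g⁻¹) (matOf_tri h⁻¹)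
      (matOf_pos h⁻¹) (matOf_tri g⁻¹) (matOf_pos g⁻¹)]

noncomputable def phi1 (n : ℕ) :
    Tstar n ℝ →* (Matrix (Fin (n*(n-1)/2+n+1)) (Fin (n*(n-1)/2+n+1)) ℝ)ˣ :=
  (Units.map ((Matrix.reindexAlgEquiv ℝ ℝ (eIdx n)).toRingEquiv.toMonoidHom)).comp (phi0 n)

lemma phi1_val (g : Tstar n ℝ) :
    ((phi1 n g : (Matrix (Fin (n*(n-1)/2+n+1)) (Fin (n*(n-1)/2+n+1)) ℝ)ˣ) :
        Matrix (Fin (n*(n-1)/2+n+1)) (Fin (n*(n-1)/2+n+1)) ℝ)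
      = (Mm n (matOf g⁻¹)).submatrix (eIdx n).symm (eIdx n).symm := by
  show (Matrix.reindexAlgEquiv ℝ ℝ (eIdx n)).toRingEquiv.toMonoidHom (Mm n (matOf g⁻¹)) = _
  simp [Matrix.reindexAlgEquiv_apply, Matrix.reindex_apply]

lemma Mm_zero_of_key_lt (A : Matrix (Fin n) (Fin n) ℝ) {x y : Idx n}
    (h : key n y < key n x) : Mm n A x y = 0 := by
  rcases x with ⟨⟨a,b⟩,hab⟩ | (k | ⟨⟩) <;> rcases y with ⟨⟨c,d⟩,hcd⟩ | (k' | ⟨⟩)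
  · rw [Mm_PP', if_neg]
    rintro ⟨h1, h2⟩
    subst h1
    rcases eq_or_lt_of_le h2 with h3 | h3
    · subst h3
      exact lt_irrefl _ h
    · exact absurd h (not_lt.2 (le_of_lt (keyP_lt_col n hab hcd h3)))
  · rw [Mm_PL]
  · exfalso
    have := keyP_lt n ⟨(a,b),hab⟩
    simp only [key] at h this
    omega
  · rw [Mm_LP]
  · rw [Mm_LL, if_neg]
    intro hc
    subst hc
    exact lt_irrefl _ h
  · exfalso
    have := k.isLt
    simp only [key] at h
    omega
  · rw [Mm_CP]
  · rw [Mm_CL]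
  · exfalso
    simp only [key] at h
    omega

lemma phi1_mem (g : Tstar n ℝ) : phi1 n g ∈ Tstar (n*(n-1)/2+n+1) ℝ := by
  refine ⟨fun p q hqp => ?_, fun p => ?_⟩
  · rw [phi1_val, Matrix.submatrix_apply]
    apply Mm_zero_of_key_lt
    have e1 : key n ((eIdx n).symm q) = (q:ℕ) := by
      rw [← eIdx_val n ((eIdx n).symm q), Equiv.apply_symm_apply]
    have e2 : key n ((eIdx n).symm p) = (p:ℕ) := by
      rw [← eIdx_val n ((eIdx n).symm p), Equiv.apply_symm_apply]
    rw [e1, e2]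
    exact hqp
  · rw [phi1_val, Matrix.submatrix_apply]
    rcases hx : (eIdx n).symm p with ⟨⟨a,b⟩,hab⟩ | (k | ⟨⟩)
    · rw [Mm_PP', if_pos ⟨rfl, le_refl _⟩]
      exact div_pos (matOf_pos g⁻¹ b) (matOf_pos g⁻¹ a)
    · rw [Mm_LL, if_pos rfl]
      exact one_pos
    · rw [Mm_CC]
      exact one_pos

noncomputable def phi (n : ℕ) : Tstar n ℝ →* Tstar (n*(n-1)/2+n+1) ℝ :=
  (phi1 n).codRestrict _ phi1_mem

lemma phi_coe (g : Tstar n ℝ) :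
    ((phi n g : Tstar (n*(n-1)/2+n+1) ℝ) :
      (Matrix (Fin (n*(n-1)/2+n+1)) (Fin (n*(n-1)/2+n+1)) ℝ)ˣ) = phi1 n g := rfl

lemma phi_entry (g : Tstar n ℝ) (x y : Idx n) :
    (((phi n g : Tstar (n*(n-1)/2+n+1) ℝ) :
        (Matrix (Fin (n*(n-1)/2+n+1)) (Fin (n*(n-1)/2+n+1)) ℝ)ˣ) :
        Matrix (Fin (n*(n-1)/2+n+1)) (Fin (n*(n-1)/2+n+1)) ℝ) (eIdx n x) (eIdx n y)
      = Mm n (matOf g⁻¹) x y := by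
  rw [phi_coe, phi1_val, Matrix.submatrix_apply, Equiv.symm_apply_apply, Equiv.symm_apply_apply]

lemma Mm_eq_one (A : Matrix (Fin n) (Fin n) ℝ)
    (hA1 : ∀ i j : Fin n, j < i → A i j = 0) (hA2 : ∀ i, 0 < A i i)
    (h : Mm n A = 1) : A = 1 := by
  ext i j
  rcases lt_trichotomy i j with hij | hij | hij
  · have h1 : Mm n A (Sum.inl ⟨(i,j),hij⟩) (Sum.inr (Sum.inr ()))
        = (1 : Matrix (Idx n) (Idx n) ℝ) (Sum.inl ⟨(i,j),hij⟩) (Sum.inr (Sum.inr ())) := by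
      rw [h]
    rw [Mm_PC', Matrix.one_apply_ne Sum.inl_ne_inr] at h1
    rw [Matrix.one_apply_ne (Fin.ne_of_lt hij)]
    exact (div_eq_zero_iff.1 h1).resolve_right (hA2 i).ne'
  · subst hij
    have h1 : Mm n A (Sum.inr (Sum.inl i)) (Sum.inr (Sum.inr ()))
        = (1 : Matrix (Idx n) (Idx n) ℝ) (Sum.inr (Sum.inl i)) (Sum.inr (Sum.inr ())) := by
      rw [h]
    rw [Mm_LC, Matrix.one_apply_ne idx_ne_LC] at h1
    rw [Matrix.one_apply_eq]
    rcases Real.log_eq_zero.1 h1 with h2 | h2 | h2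
    · exact absurd h2 (hA2 i).ne'
    · exact h2
    · exfalso; nlinarith [hA2 i]
  · rw [hA1 i j hij, Matrix.one_apply_ne (Fin.ne_of_gt hij)]

lemma phi1_val_one (g : Tstar n ℝ)
    (h : ((phi1 n g : (Matrix (Fin (n*(n-1)/2+n+1)) (Fin (n*(n-1)/2+n+1)) ℝ)ˣ) :
        Matrix (Fin (n*(n-1)/2+n+1)) (Fin (n*(n-1)/2+n+1)) ℝ) = 1) : g = 1 := by
  have h2 : Mm n (matOf g⁻¹) = 1 := by
    ext x y
    have h3 : ((phi1 n g : (Matrix _ _ ℝ)ˣ) : Matrix _ _ ℝ) (eIdx n x) (eIdx n y)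
        = (1 : Matrix _ _ ℝ) (eIdx n x) (eIdx n y) := by rw [h]
    rw [phi1_val, Matrix.submatrix_apply, Equiv.symm_apply_apply, Equiv.symm_apply_apply] at h3
    rw [h3, Matrix.one_apply, Matrix.one_apply]
    by_cases hxy : x = y
    · subst hxy; rw [if_pos rfl, if_pos rfl]
    · rw [if_neg hxy, if_neg (fun hc => hxy ((eIdx n).injective hc))]
  have h4 : matOf g⁻¹ = 1 := Mm_eq_one _ (matOf_tri _) (matOf_pos _) h2
  have h5 : (g⁻¹ : Tstar n ℝ) = 1 := Subtype.ext (Units.ext h4)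
  exact inv_eq_one.1 h5

lemma phi_inj (n : ℕ) : Function.Injective (phi n) := by
  rw [injective_iff_map_eq_one]
  intro g hg
  apply phi1_val_one g
  have h1 : phi1 n g = 1 := Subtype.ext_iff.1 hg
  rw [h1, Units.val_one]

lemma eIdx_const (n : ℕ) :
    eIdx n (Sum.inr (Sum.inr ())) = Fin.last (n*(n-1)/2 + n) := by
  apply Fin.ext
  rw [eIdx_val]
  show tri (n-1) + n = _
  rw [Fin.val_last]
  have := m_eq_tri n
  omega

lemma lastOf_eq (r : Fin (n*(n-1)/2+n+1)) : lastOf r = Fin.last (n*(n-1)/2+n) := by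
  apply Fin.ext
  show n*(n-1)/2+n+1-1 = _
  rw [Fin.val_last]
  omega

end Hom

end EHAux

/-- For `m = n(n-1)/2` there is an injective group homomorphism
`φ : T*(n,ℝ) → T*(m+n+1,ℝ)` such that each `φ g` has bottom-right entry `1` and `φ g` is
essentially hyperbolic for every `g ≠ 1`. -/
theorem Tstar_embeds_essentiallyHyperbolically (n : ℕ) :
    ∃ φ : Tstar n ℝ →* Tstar (n * (n - 1) / 2 + n + 1) ℝ,
      Function.Injective φ ∧
      (∀ g : Tstar n ℝ,
        (((φ g : Tstar (n * (n - 1) / 2 + n + 1) ℝ) :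
            (Matrix (Fin (n * (n - 1) / 2 + n + 1)) (Fin (n * (n - 1) / 2 + n + 1)) ℝ)ˣ) :
          Matrix (Fin (n * (n - 1) / 2 + n + 1)) (Fin (n * (n - 1) / 2 + n + 1)) ℝ)
          (Fin.last (n * (n - 1) / 2 + n)) (Fin.last (n * (n - 1) / 2 + n)) = 1) ∧
      ∀ g : Tstar n ℝ, g ≠ 1 →
        EssentiallyHyperbolic
          (((φ g : Tstar (n * (n - 1) / 2 + n + 1) ℝ) :
              (Matrix (Fin (n * (n - 1) / 2 + n + 1)) (Fin (n * (n - 1) / 2 + n + 1)) ℝ)ˣ) :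
            Matrix (Fin (n * (n - 1) / 2 + n + 1)) (Fin (n * (n - 1) / 2 + n + 1)) ℝ) := by
  classical
  refine ⟨EHAux.phi n, EHAux.phi_inj n, fun g => ?_, fun g hg => ?_⟩
  · rw [← EHAux.eIdx_const n, EHAux.phi_entry g, EHAux.Mm_CC]
  · have hA1 := EHAux.matOf_tri (g⁻¹ : Tstar n ℝ)
    have hA2 := EHAux.matOf_pos (g⁻¹ : Tstar n ℝ)
    have hMne : (((EHAux.phi n g : Tstar (n*(n-1)/2+n+1) ℝ) :
        (Matrix (Fin (n*(n-1)/2+n+1)) (Fin (n*(n-1)/2+n+1)) ℝ)ˣ) :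
        Matrix (Fin (n*(n-1)/2+n+1)) (Fin (n*(n-1)/2+n+1)) ℝ) ≠ 1 := by
      intro hc
      apply hg
      apply EHAux.phi1_val_one g
      rw [← EHAux.phi_coe g]
      exact hc
    have hent : ∀ x y : EHAux.Idx n,
        ((((EHAux.phi n g : Tstar (n*(n-1)/2+n+1) ℝ) :
            (Matrix (Fin (n*(n-1)/2+n+1)) (Fin (n*(n-1)/2+n+1)) ℝ)ˣ) :
            Matrix (Fin (n*(n-1)/2+n+1)) (Fin (n*(n-1)/2+n+1)) ℝ) - 1)
            (EHAux.eIdx n x) (EHAux.eIdx n y)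
          = EHAux.Mm n (EHAux.matOf g⁻¹) x y - (if x = y then 1 else 0) := by
      intro x y
      rw [Matrix.sub_apply, EHAux.phi_entry, Matrix.one_apply]
      congr 1
      by_cases hxy : x = y
      · rw [if_pos hxy, if_pos (congrArg (EHAux.eIdx n) hxy)]
      · rw [if_neg hxy, if_neg (fun hc => hxy ((EHAux.eIdx n).injective hc))]
    by_cases hdiag : ∃ k : Fin n, EHAux.matOf (g⁻¹ : Tstar n ℝ) k k ≠ 1
    · -- diagonal case
      obtain ⟨kw, hkw⟩ := hdiag
      have hSne : (Finset.univ.filter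
          (fun k : Fin n => EHAux.matOf (g⁻¹ : Tstar n ℝ) k k ≠ 1)).Nonempty :=
        ⟨kw, by simp [hkw]⟩
      set k0 := (Finset.univ.filter
        (fun k : Fin n => EHAux.matOf (g⁻¹ : Tstar n ℝ) k k ≠ 1)).max' hSne with hk0def
      have hk0 : EHAux.matOf (g⁻¹ : Tstar n ℝ) k0 k0 ≠ 1 := by
        have := Finset.max'_mem _ hSne
        rw [Finset.mem_filter] at this
        exact this.2
      have hk0max : ∀ k : Fin n, EHAux.matOf (g⁻¹ : Tstar n ℝ) k k ≠ 1 → k ≤ k0 :=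
        fun k hk => Finset.le_max' _ k (by simp [hk])
      refine ⟨hMne, EHAux.eIdx n (Sum.inr (Sum.inl k0)), ?_, ?_, ?_⟩
      · show EHAux.key n (Sum.inr (Sum.inl k0)) + 1 < n*(n-1)/2+n+1
        have e1 : EHAux.key n (Sum.inr (Sum.inl k0)) = EHAux.tri (n-1) + (k0:ℕ) := rfl
        have := k0.isLt
        have := EHAux.m_eq_tri n
        omega
      · rw [EHAux.lastOf_eq, ← EHAux.eIdx_const n, hent, if_neg EHAux.idx_ne_LC,
          EHAux.Mm_LC, sub_zero]
        intro hc
        rcases Real.log_eq_zero.1 hc with h2 | h2 | h2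
        · exact (hA2 k0).ne' h2
        · exact hk0 h2
        · nlinarith [hA2 k0]
      · intro p q hpq
        obtain ⟨x, rfl⟩ : ∃ x, EHAux.eIdx n x = p := ⟨_, (EHAux.eIdx n).apply_symm_apply p⟩
        obtain ⟨y, rfl⟩ : ∃ y, EHAux.eIdx n y = q := ⟨_, (EHAux.eIdx n).apply_symm_apply q⟩
        rw [hent x y] at hpq
        rcases x with px | (k | ⟨⟩)
        · left
          show EHAux.key n (Sum.inl px) < EHAux.key n (Sum.inr (Sum.inl k0))
          have h1 := EHAux.keyP_lt n px
          have e2 : EHAux.key n (Sum.inr (Sum.inl k0)) = EHAux.tri (n-1) + (k0:ℕ) := rfl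
          omega
        · rcases y with qy | (k' | ⟨⟩)
          · exfalso
            rw [EHAux.Mm_LP, if_neg (fun hc => Sum.inr_ne_inl hc), sub_zero] at hpq
            exact hpq rfl
          · exfalso
            rw [EHAux.Mm_LL] at hpq
            by_cases hkk : k' = k
            · subst hkk
              rw [if_pos rfl, if_pos rfl, sub_self] at hpq
              exact hpq rfl
            · rw [if_neg hkk, if_neg, sub_zero] at hpq
              · exact hpq rfl
              · intro hc
                injection hc with h2
                injection h2 with h3
                exact hkk h3.symm
          · rw [EHAux.Mm_LC, if_neg EHAux.idx_ne_LC, sub_zero] at hpq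
            have hk : EHAux.matOf (g⁻¹ : Tstar n ℝ) k k ≠ 1 := by
              intro hc
              rw [hc, Real.log_one] at hpq
              exact hpq rfl
            rcases lt_or_eq_of_le (hk0max k hk) with h1 | h1
            · left
              show EHAux.key n (Sum.inr (Sum.inl k)) < EHAux.key n (Sum.inr (Sum.inl k0))
              have e1 : EHAux.key n (Sum.inr (Sum.inl k)) = EHAux.tri (n-1) + (k:ℕ) := rfl
              have e2 : EHAux.key n (Sum.inr (Sum.inl k0)) = EHAux.tri (n-1) + (k0:ℕ) := rfl
              have h2 : (k:ℕ) < (k0:ℕ) := h1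
              omega
            · right
              constructor
              · rw [h1]
              · rw [EHAux.lastOf_eq, EHAux.eIdx_const n]
        · exfalso
          rcases y with qy | (k' | ⟨⟩)
          · rw [EHAux.Mm_CP, if_neg (fun hc => Sum.inr_ne_inl hc), sub_zero] at hpq
            exact hpq rfl
          · rw [EHAux.Mm_CL, if_neg EHAux.idx_ne_CL, sub_zero] at hpq
            exact hpq rfl
          · rw [EHAux.Mm_CC, if_pos rfl, sub_self] at hpq
            exact hpq rfl
    · -- unipotent case
      push_neg at hdiag
      have hAd : ∀ k : Fin n, EHAux.matOf (g⁻¹ : Tstar n ℝ) k k = 1 := hdiag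
      have hAne : EHAux.matOf (g⁻¹ : Tstar n ℝ) ≠ 1 := by
        intro hc
        apply hg
        exact inv_eq_one.1 (Subtype.ext (Units.ext hc))
      have hex : ∃ p : EHAux.Pairs n, EHAux.matOf (g⁻¹ : Tstar n ℝ) p.1.1 p.1.2 ≠ 0 := by
        by_contra hc
        push_neg at hc
        apply hAne
        ext i j
        rcases lt_trichotomy i j with hij | hij | hij
        · have h0 : EHAux.matOf (g⁻¹ : Tstar n ℝ) i j = 0 := hc ⟨(i,j),hij⟩
          rw [h0, Matrix.one_apply_ne (Fin.ne_of_lt hij)]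
        · subst hij
          rw [hAd i, Matrix.one_apply_eq]
        · rw [hA1 i j hij, Matrix.one_apply_ne (Fin.ne_of_gt hij)]
      obtain ⟨p0, hp0mem, hp0max⟩ := Finset.exists_max_image
        (Finset.univ.filter
          (fun p : EHAux.Pairs n => EHAux.matOf (g⁻¹ : Tstar n ℝ) p.1.1 p.1.2 ≠ 0))
        (fun p => EHAux.key n (Sum.inl p))
        (by obtain ⟨p, hp⟩ := hex; exact ⟨p, by simp [hp]⟩)
      rw [Finset.mem_filter] at hp0mem
      have hp0ne := hp0mem.2
      have hp0max' : ∀ p : EHAux.Pairs n, EHAux.matOf (g⁻¹ : Tstar n ℝ) p.1.1 p.1.2 ≠ 0 →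
          EHAux.key n (Sum.inl p) ≤ EHAux.key n (Sum.inl p0) :=
        fun p hp => hp0max p (by simp [hp])
      refine ⟨hMne, EHAux.eIdx n (Sum.inl p0), ?_, ?_, ?_⟩
      · show EHAux.key n (Sum.inl p0) + 1 < n*(n-1)/2+n+1
        have h1 := EHAux.keyP_lt n p0
        have := EHAux.m_eq_tri n
        omega
      · rw [EHAux.lastOf_eq, ← EHAux.eIdx_const n, hent, if_neg Sum.inl_ne_inr, sub_zero,
          EHAux.Mm_PC, hAd p0.1.1, div_one]
        exact hp0ne
      · intro p q hpq
        obtain ⟨x, rfl⟩ : ∃ x, EHAux.eIdx n x = p := ⟨_, (EHAux.eIdx n).apply_symm_apply p⟩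
        obtain ⟨y, rfl⟩ : ∃ y, EHAux.eIdx n y = q := ⟨_, (EHAux.eIdx n).apply_symm_apply q⟩
        rw [hent x y] at hpq
        rcases x with ⟨⟨i,j⟩,hij⟩ | (k | ⟨⟩)
        · rcases y with ⟨⟨i',l⟩,hil⟩ | (k' | ⟨⟩)
          · rw [EHAux.Mm_PP'] at hpq
            by_cases hcond : i' = i ∧ l ≤ j
            · rw [if_pos hcond] at hpq
              rcases eq_or_lt_of_le hcond.2 with h3 | h3
              · exfalso
                have hxy : (Sum.inl ⟨(i,j),hij⟩ : EHAux.Idx n) = Sum.inl ⟨(i',l),hil⟩ := by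
                  rw [Sum.inl.injEq]
                  exact (Subtype.ext (Prod.ext hcond.1 h3)).symm
                rw [if_pos hxy, h3, hAd j, hAd i, div_one, sub_self] at hpq
                exact hpq rfl
              · have hxy : (Sum.inl ⟨(i,j),hij⟩ : EHAux.Idx n) ≠ Sum.inl ⟨(i',l),hil⟩ := by
                  intro hc
                  simp only [Sum.inl.injEq, Subtype.mk.injEq, Prod.mk.injEq] at hc
                  exact absurd hc.2 (Fin.ne_of_gt h3)
                rw [if_neg hxy, sub_zero, hAd i, div_one] at hpq
                left
                show EHAux.key n (Sum.inl ⟨(i,j),hij⟩) < EHAux.key n (Sum.inl p0)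
                have hil' : i < l := hcond.1 ▸ hil
                have hk1 := EHAux.keyP_lt_row n (i := i) (l := l) (j := j) hij h3 hil'
                have hk2 := hp0max' ⟨(l,j),h3⟩ hpq
                omega
            · exfalso
              rw [if_neg hcond, if_neg, sub_zero] at hpq
              · exact hpq rfl
              · intro hc
                simp only [Sum.inl.injEq, Subtype.mk.injEq, Prod.mk.injEq] at hc
                exact hcond ⟨hc.1.symm, le_of_eq hc.2.symm⟩
          · exfalso
            rw [EHAux.Mm_PL, if_neg Sum.inl_ne_inr, sub_zero] at hpq
            exact hpq rfl
          · rw [EHAux.Mm_PC', if_neg Sum.inl_ne_inr, sub_zero, hAd i, div_one] at hpq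
            rcases eq_or_lt_of_le (hp0max' ⟨(i,j),hij⟩ hpq) with h1 | h1
            · right
              have hx : (Sum.inl (⟨(i,j),hij⟩ : EHAux.Pairs n) : EHAux.Idx n) = Sum.inl p0 :=
                EHAux.key_inj n h1
              constructor
              · rw [hx]
              · rw [EHAux.lastOf_eq, EHAux.eIdx_const n]
            · left
              exact h1
        · exfalso
          rcases y with qy | (k' | ⟨⟩)
          · rw [EHAux.Mm_LP, if_neg (fun hc => Sum.inr_ne_inl hc), sub_zero] at hpq
            exact hpq rfl
          · rw [EHAux.Mm_LL] at hpq
            by_cases hkk : k' = k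
            · subst hkk
              rw [if_pos rfl, if_pos rfl, sub_self] at hpq
              exact hpq rfl
            · rw [if_neg hkk, if_neg, sub_zero] at hpq
              · exact hpq rfl
              · intro hc
                injection hc with h2
                injection h2 with h3
                exact hkk h3.symm
          · rw [EHAux.Mm_LC, if_neg EHAux.idx_ne_LC, sub_zero, hAd k, Real.log_one] at hpq
            exact hpq rfl
        · exfalso
          rcases y with qy | (k' | ⟨⟩)
          · rw [EHAux.Mm_CP, if_neg (fun hc => Sum.inr_ne_inl hc), sub_zero] at hpq
            exact hpq rfl
          · rw [EHAux.Mm_CL, if_neg EHAux.idx_ne_CL, sub_zero] at hpq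
            exact hpq rfl
          · rw [EHAux.Mm_CC, if_pos rfl, sub_self] at hpq
            exact hpq rfl
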